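/- Let c be a copula density on [0,1]². Then the third Blest measure η = 6 ∫₀¹∫₀¹ u² v² c(u,v) du dv − 1/5 satisfies 0 ≤ η ≤ 1. -/

import Mathlib

open MeasureTheory Set

/-- The unit square `[0,1]² ⊆ ℝ²`. -/
def unitSquare : Set (ℝ × ℝ) := Icc (0:ℝ) 1 ×ˢ Icc (0:ℝ) 1

/-- A copula density: a nonnegative measurable function on `[0,1]²` integrating to `1`
whose two marginal densities are both the uniform density on `[0,1]`. -/
def IsCopulaDensity (c : ℝ → ℝ → ℝ) : Prop :=
  Measurable (Function.uncurry c) ∧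
  (∀ u ∈ Icc (0:ℝ) 1, ∀ v ∈ Icc (0:ℝ) 1, 0 ≤ c u v) ∧
  (∫ p in unitSquare, c p.1 p.2 = 1) ∧
  (∀ᵐ u ∂(volume.restrict (Icc (0:ℝ) 1)), ∫ v in Icc (0:ℝ) 1, c u v = 1) ∧
  (∀ᵐ v ∂(volume.restrict (Icc (0:ℝ) 1)), ∫ u in Icc (0:ℝ) 1, c u v = 1)

lemma measurableSet_unitSquare : MeasurableSet unitSquare :=
  measurableSet_Icc.prod measurableSet_Icc

lemma copula_integrableOn (c : ℝ → ℝ → ℝ) (hc : IsCopulaDensity c) :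
    IntegrableOn (fun p : ℝ × ℝ => c p.1 p.2) unitSquare := by
  by_contra h
  have := hc.2.2.1
  rw [MeasureTheory.integral_undef h] at this
  norm_num at this

lemma copula_mul_integrableOn (c : ℝ → ℝ → ℝ) (hc : IsCopulaDensity c)
    (g : ℝ × ℝ → ℝ) (hg : Measurable g) (C : ℝ)
    (hC : ∀ p ∈ unitSquare, |g p| ≤ C) :
    IntegrableOn (fun p : ℝ × ℝ => g p * c p.1 p.2) unitSquare := by
  refine (copula_integrableOn c hc).bdd_mul (c := C) hg.aestronglyMeasurable ?_
  filter_upwards [ae_restrict_mem measurableSet_unitSquare] with p hp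
  simpa [Real.norm_eq_abs] using hC p hp

lemma restrict_unitSquare :
    (volume : Measure (ℝ × ℝ)).restrict unitSquare
      = (volume.restrict (Icc (0:ℝ) 1)).prod (volume.restrict (Icc (0:ℝ) 1)) := by
  rw [Measure.prod_restrict, unitSquare]
  rfl

/-- Integrating `φ(u)·c(u,v)` over the square gives `∫ φ`. -/
lemma copula_marg1 (c : ℝ → ℝ → ℝ) (hc : IsCopulaDensity c)
    (φ : ℝ → ℝ) (hφ : Measurable φ) (C : ℝ) (hC : ∀ t ∈ Icc (0:ℝ) 1, |φ t| ≤ C) :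
    ∫ p in unitSquare, φ p.1 * c p.1 p.2 = ∫ t in Icc (0:ℝ) 1, φ t := by
  have hint : IntegrableOn (fun p : ℝ × ℝ => φ p.1 * c p.1 p.2) unitSquare :=
    copula_mul_integrableOn c hc _ (hφ.comp measurable_fst) C
      (fun p hp => hC p.1 hp.1)
  rw [IntegrableOn, restrict_unitSquare] at hint
  calc ∫ p in unitSquare, φ p.1 * c p.1 p.2
      = ∫ u in Icc (0:ℝ) 1, ∫ v in Icc (0:ℝ) 1, φ u * c u v := by
        rw [restrict_unitSquare]
        exact MeasureTheory.integral_prod _ hint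
    _ = ∫ t in Icc (0:ℝ) 1, φ t := by
        refine integral_congr_ae ?_
        filter_upwards [hc.2.2.2.1] with u hu
        rw [MeasureTheory.integral_const_mul, hu, mul_one]

/-- Integrating `ψ(v)·c(u,v)` over the square gives `∫ ψ`. -/
lemma copula_marg2 (c : ℝ → ℝ → ℝ) (hc : IsCopulaDensity c)
    (ψ : ℝ → ℝ) (hψ : Measurable ψ) (C : ℝ) (hC : ∀ t ∈ Icc (0:ℝ) 1, |ψ t| ≤ C) :
    ∫ p in unitSquare, ψ p.2 * c p.1 p.2 = ∫ t in Icc (0:ℝ) 1, ψ t := by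
  have hint : IntegrableOn (fun p : ℝ × ℝ => ψ p.2 * c p.1 p.2) unitSquare :=
    copula_mul_integrableOn c hc _ (hψ.comp measurable_snd) C
      (fun p hp => hC p.2 hp.2)
  rw [IntegrableOn, restrict_unitSquare] at hint
  calc ∫ p in unitSquare, ψ p.2 * c p.1 p.2
      = ∫ v in Icc (0:ℝ) 1, ∫ u in Icc (0:ℝ) 1, ψ v * c u v := by
        rw [restrict_unitSquare]
        exact MeasureTheory.integral_prod_symm _ hint
    _ = ∫ t in Icc (0:ℝ) 1, ψ t := by
        refine integral_congr_ae ?_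
        filter_upwards [hc.2.2.2.2] with v hv
        rw [MeasureTheory.integral_const_mul, hv, mul_one]

/-- Combined: `∫ (φ(u)+ψ(v))·c = ∫φ + ∫ψ`. -/
lemma copula_split (c : ℝ → ℝ → ℝ) (hc : IsCopulaDensity c)
    (φ ψ : ℝ → ℝ) (hφ : Measurable φ) (hψ : Measurable ψ) (C : ℝ)
    (hCφ : ∀ t ∈ Icc (0:ℝ) 1, |φ t| ≤ C) (hCψ : ∀ t ∈ Icc (0:ℝ) 1, |ψ t| ≤ C) :
    ∫ p in unitSquare, (φ p.1 + ψ p.2) * c p.1 p.2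
      = (∫ t in Icc (0:ℝ) 1, φ t) + ∫ t in Icc (0:ℝ) 1, ψ t := by
  have h1 : IntegrableOn (fun p : ℝ × ℝ => φ p.1 * c p.1 p.2) unitSquare :=
    copula_mul_integrableOn c hc _ (hφ.comp measurable_fst) C (fun p hp => hCφ p.1 hp.1)
  have h2 : IntegrableOn (fun p : ℝ × ℝ => ψ p.2 * c p.1 p.2) unitSquare :=
    copula_mul_integrableOn c hc _ (hψ.comp measurable_snd) C (fun p hp => hCψ p.2 hp.2)
  have : ∫ p in unitSquare, (φ p.1 + ψ p.2) * c p.1 p.2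
      = ∫ p in unitSquare, (φ p.1 * c p.1 p.2 + ψ p.2 * c p.1 p.2) := by
    congr 1; funext p; ring
  rw [this, integral_add h1 h2, copula_marg1 c hc φ hφ C hCφ,
    copula_marg2 c hc ψ hψ C hCψ]

/-- For a copula density `c`, the third Blest measure
`η = 6 ∫₀¹∫₀¹ u² v² c(u,v) du dv − 1/5` satisfies `0 ≤ η ≤ 1`. -/
theorem blest_III_bounds (c : ℝ → ℝ → ℝ) (hc : IsCopulaDensity c) :
    0 ≤ 6 * (∫ p in unitSquare, p.1 ^ 2 * p.2 ^ 2 * c p.1 p.2) - 1 / 5 ∧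
    6 * (∫ p in unitSquare, p.1 ^ 2 * p.2 ^ 2 * c p.1 p.2) - 1 / 5 ≤ 1 := by
  have hnn := hc.2.1
  -- integrability of the main integrand
  have hI : IntegrableOn (fun p : ℝ × ℝ => p.1 ^ 2 * p.2 ^ 2 * c p.1 p.2) unitSquare := by
    refine copula_mul_integrableOn c hc (fun p => p.1 ^ 2 * p.2 ^ 2)
      ((measurable_fst.pow_const 2).mul (measurable_snd.pow_const 2)) 1 ?_
    rintro ⟨u, v⟩ ⟨⟨hu0, hu1⟩, ⟨hv0, hv1⟩⟩
    simp only at hu0 hu1 hv0 hv1 ⊢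
    rw [abs_le]
    have h1 : u ^ 2 ≤ 1 := by nlinarith
    have h2 : v ^ 2 ≤ 1 := by nlinarith
    have h3 := mul_le_mul h1 h2 (sq_nonneg v) zero_le_one
    have h4 := mul_nonneg (sq_nonneg u) (sq_nonneg v)
    constructor <;> linarith
  -- the lower comparison function
  set a : ℝ → ℝ := fun t => t ^ 2 - 4/3 * t ^ 3 + t ^ 4 / 2 - 1/12 with ha
  have haMeas : Measurable a := by fun_prop
  have haBound : ∀ t ∈ Icc (0:ℝ) 1, |a t| ≤ 1 := by
    rintro t ⟨h0, h1⟩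
    simp only [ha]
    rw [abs_le]
    constructor <;>
      nlinarith [sq_nonneg t, sq_nonneg (1-t), mul_nonneg h0 h0,
        mul_nonneg (mul_nonneg h0 h0) h0, mul_nonneg (mul_nonneg (mul_nonneg h0 h0) h0) h0,
        mul_nonneg (mul_nonneg h0 h0) (sub_nonneg.2 h1),
        mul_nonneg (mul_nonneg (mul_nonneg h0 h0) h0) (sub_nonneg.2 h1)]
  have hLa : IntegrableOn (fun p : ℝ × ℝ => (a p.1 + a p.2) * c p.1 p.2) unitSquare := by
    refine copula_mul_integrableOn c hc _ (by fun_prop) 2 ?_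
    rintro ⟨u, v⟩ ⟨hu, hv⟩
    calc |a u + a v| ≤ |a u| + |a v| := abs_add_le _ _
      _ ≤ 2 := by linarith [haBound u hu, haBound v hv]
  -- the upper comparison function
  set b : ℝ → ℝ := fun t => t ^ 4 / 2 with hb
  have hbMeas : Measurable b := by fun_prop
  have hbBound : ∀ t ∈ Icc (0:ℝ) 1, |b t| ≤ 1 := by
    rintro t ⟨h0, h1⟩
    simp only [hb]
    rw [abs_le]
    constructor <;>
      nlinarith [mul_nonneg (mul_nonneg h0 h0) (mul_nonneg h0 h0),
        mul_nonneg (mul_nonneg (mul_nonneg h0 h0) h0) (sub_nonneg.2 h1)]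
  have hLb : IntegrableOn (fun p : ℝ × ℝ => (b p.1 + b p.2) * c p.1 p.2) unitSquare := by
    refine copula_mul_integrableOn c hc _ (by fun_prop) 2 ?_
    rintro ⟨u, v⟩ ⟨hu, hv⟩
    calc |b u + b v| ≤ |b u| + |b v| := abs_add_le _ _
      _ ≤ 2 := by linarith [hbBound u hu, hbBound v hv]
  -- value of the lower comparison integral
  have hIa : ∫ p in unitSquare, (a p.1 + a p.2) * c p.1 p.2 = 1/30 := by
    rw [copula_split c hc a a haMeas haMeas 1 haBound haBound]
    have : ∫ t in Icc (0:ℝ) 1, a t = 1/60 := by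
      rw [ha, MeasureTheory.integral_Icc_eq_integral_Ioc,
        ← intervalIntegral.integral_of_le (zero_le_one (α := ℝ))]
      have h : ∀ n : ℕ, IntervalIntegrable (fun t : ℝ => t ^ n) volume 0 1 :=
        fun n => (continuous_pow n).intervalIntegrable 0 1
      rw [intervalIntegral.integral_sub (((h 2).sub ((h 3).const_mul _)).add ((h 4).div_const _))
          intervalIntegrable_const,
        intervalIntegral.integral_add ((h 2).sub ((h 3).const_mul _)) ((h 4).div_const _),
        intervalIntegral.integral_sub (h 2) ((h 3).const_mul _),
        intervalIntegral.integral_const_mul, intervalIntegral.integral_div, integral_pow,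
        integral_pow, integral_pow]
      norm_num
    rw [this]; norm_num
  -- value of the upper comparison integral
  have hIb : ∫ p in unitSquare, (b p.1 + b p.2) * c p.1 p.2 = 1/5 := by
    rw [copula_split c hc b b hbMeas hbMeas 1 hbBound hbBound]
    have : ∫ t in Icc (0:ℝ) 1, b t = 1/10 := by
      rw [hb, MeasureTheory.integral_Icc_eq_integral_Ioc,
        ← intervalIntegral.integral_of_le (zero_le_one (α := ℝ))]
      norm_num [integral_pow]
    rw [this]; norm_num
  -- lower bound
  have hlow : (1:ℝ)/30 ≤ ∫ p in unitSquare, p.1 ^ 2 * p.2 ^ 2 * c p.1 p.2 := by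
    rw [← hIa]
    refine setIntegral_mono_on hLa hI measurableSet_unitSquare ?_
    rintro ⟨u, v⟩ ⟨hu, hv⟩
    have hc0 : 0 ≤ c u v := hnn u hu v hv
    have key : a u + a v ≤ u ^ 2 * v ^ 2 := by
      obtain ⟨hu0, hu1⟩ := hu; obtain ⟨hv0, hv1⟩ := hv
      have hq : 0 ≤ 1/6 + (u + v)/3 - (u - v) ^ 2 / 2 := by
        nlinarith [sq_nonneg (u - v), mul_nonneg hu0 hv0,
          mul_nonneg (sub_nonneg.2 hu1) (sub_nonneg.2 hv1),
          mul_nonneg hu0 (sub_nonneg.2 hv1), mul_nonneg hv0 (sub_nonneg.2 hu1)]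
      have := mul_nonneg (sq_nonneg (u + v - 1)) hq
      simp only [ha]
      nlinarith [this]
    exact mul_le_mul_of_nonneg_right key hc0
  -- upper bound
  have hhigh : (∫ p in unitSquare, p.1 ^ 2 * p.2 ^ 2 * c p.1 p.2) ≤ 1/5 := by
    rw [← hIb]
    refine setIntegral_mono_on hI hLb measurableSet_unitSquare ?_
    rintro ⟨u, v⟩ ⟨hu, hv⟩
    have hc0 : 0 ≤ c u v := hnn u hu v hv
    have key : u ^ 2 * v ^ 2 ≤ b u + b v := by
      simp only [hb]
      nlinarith [sq_nonneg (u ^ 2 - v ^ 2)]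
    exact mul_le_mul_of_nonneg_right key hc0
  constructor <;> linarith
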